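/- Let B be a finite Boolean algebra with exactly 2^n elements (n ≥ 2), and let I₁, …, Iₙ be its n lattice ideals of cardinality 2^{n−1}. Then the ℤ/2ℤ-valued characteristic functions c_{I₁}, …, c_{Iₙ} : B → ℤ/2ℤ are linearly independent over ℤ/2ℤ, and every nonzero element of their ℤ/2ℤ-linear span has Hamming weight exactly 2^{n−1} (i.e. exactly 2^{n−1} nonzero coordinates). Hence these codewords generate a Hadamard code of type [2^n, n, 2^{n−1}]₂: a binary linear code of length 2^n, dimension n and minimum distance 2^{n−1}. -/

import Mathlib

section aux
variable {B : Type*} [BooleanAlgebra B]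

lemma atom_disjoint_iff {a x : B} (ha : IsAtom a) : Disjoint a x ↔ ¬ a ≤ x := by
  constructor
  · intro h hax
    exact ha.1 (le_bot_iff.1 (h le_rfl hax))
  · intro h
    rcases ha.le_iff.1 (inf_le_left : a ⊓ x ≤ a) with h0 | h1
    · exact disjoint_iff.2 h0
    · exact absurd (inf_eq_left.1 h1) h

lemma atom_le_sup_iff {a u v : B} (ha : IsAtom a) : a ≤ u ⊔ v ↔ a ≤ u ∨ a ≤ v := by
  constructor
  · intro h
    by_contra hc
    push_neg at hc
    have hdu := (atom_disjoint_iff ha).2 hc.1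
    have hdv := (atom_disjoint_iff ha).2 hc.2
    exact (atom_disjoint_iff ha).1 (hdu.sup_right hdv) h
  · rintro (h | h)
    · exact h.trans le_sup_left
    · exact h.trans le_sup_right

lemma atom_le_symmDiff_self {a x : B} (ha : IsAtom a) : a ≤ symmDiff x a ↔ ¬ a ≤ x := by
  rw [symmDiff_def, atom_le_sup_iff ha]
  have hxa : x \ a ≤ aᶜ := by rw [sdiff_eq]; exact inf_le_right
  have h1 : ¬ a ≤ x \ a := fun h =>
    ha.1 (disjoint_self.1 (le_compl_iff_disjoint_left.1 (h.trans hxa)))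
  have h2 : a ≤ a \ x ↔ ¬ a ≤ x := by
    rw [sdiff_eq, le_inf_iff, and_iff_right le_rfl, le_compl_iff_disjoint_right,
      atom_disjoint_iff ha]
  tauto

lemma atom_le_symmDiff_other {a b x : B} (ha : IsAtom a) (hb : IsAtom b) (hne : b ≠ a) :
    b ≤ symmDiff x a ↔ b ≤ x := by
  have hdisj : Disjoint b a := hb.disjoint_of_ne ha hne
  rw [symmDiff_def, atom_le_sup_iff hb]
  have h1 : ¬ b ≤ a \ x := fun h => hne ((ha.le_iff_eq hb.1).mp (h.trans sdiff_le))
  constructor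
  · rintro (h | h)
    · exact h.trans sdiff_le
    · exact absurd h h1
  · intro h
    refine Or.inl ?_
    rw [sdiff_eq]
    exact le_inf h (le_compl_iff_disjoint_right.2 hdisj)

end aux

section aux2
variable {B : Type*} [BooleanAlgebra B]

noncomputable def complSplit (t : B) : B ≃ {x : B // x ≤ t} × {x : B // x ≤ tᶜ} where
  toFun x := (⟨x ⊓ t, inf_le_right⟩, ⟨x ⊓ tᶜ, inf_le_right⟩)
  invFun p := p.1.1 ⊔ p.2.1
  left_inv x := by
    show x ⊓ t ⊔ x ⊓ tᶜ = x
    rw [← inf_sup_left, sup_compl_eq_top, inf_top_eq]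
  right_inv p := by
    obtain ⟨⟨u, hu⟩, ⟨v, hv⟩⟩ := p
    have h1 : v ⊓ t = ⊥ := disjoint_iff.1 (le_compl_iff_disjoint_right.1 hv)
    have h2 : u ⊓ tᶜ = ⊥ := le_bot_iff.1 ((inf_le_inf_right tᶜ hu).trans_eq inf_compl_eq_bot)
    have h3 : v ⊓ tᶜ = v := inf_eq_left.2 hv
    simp only [Prod.mk.injEq, Subtype.mk.injEq]
    constructor
    · rw [inf_sup_right, inf_eq_left.2 hu, h1, sup_bot_eq]
    · rw [inf_sup_right, h2, h3, bot_sup_eq]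

lemma ideal_atom [Fintype B] {n : ℕ} (hn : 1 ≤ n)
    (hcard : Fintype.card B = 2 ^ n) (J : Order.Ideal B)
    (hJ : (J : Set B).ncard = 2 ^ (n - 1)) :
    ∃ a : B, IsAtom a ∧ ∀ x, x ∈ J ↔ ¬ a ≤ x := by
  classical
  set s : Finset B := Finset.univ.filter (· ∈ J) with hs
  set t : B := s.sup id with hts
  have htJ : t ∈ J := by
    refine Finset.sup_induction J.bot_mem (fun u hu v hv => Order.Ideal.sup_mem hu hv) ?_
    intro b hb
    exact (Finset.mem_filter.1 hb).2
  have hmem : ∀ x, x ∈ J ↔ x ≤ t := by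
    intro x
    constructor
    · intro hx
      exact Finset.le_sup (f := id) (by simp [hs, hx])
    · intro hx
      exact J.lower hx htJ
  have hprod : (2 : ℕ) ^ n =
      Nat.card {x : B // x ≤ t} * Nat.card {x : B // x ≤ tᶜ} := by
    rw [← Nat.card_prod, ← Nat.card_congr (complSplit t), Nat.card_eq_fintype_card, hcard]
  have hleft : Nat.card {x : B // x ≤ t} = 2 ^ (n - 1) := by
    rw [← hJ, ← Nat.card_coe_set_eq]
    exact (Nat.card_congr (Equiv.subtypeEquivRight (fun x => by
      simpa using hmem x))).symm
  have hpow : (2 : ℕ) ^ n = 2 ^ (n - 1) * 2 := by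
    rw [← pow_succ]; congr 1; omega
  have h2 : Fintype.card {x : B // x ≤ tᶜ} = 2 := by
    rw [← Nat.card_eq_fintype_card]
    have hpos : 0 < (2:ℕ) ^ (n-1) := Nat.pow_pos (by norm_num)
    refine Nat.eq_of_mul_eq_mul_left hpos ?_
    rw [← hleft, ← hprod, hleft, ← hpow]
  have hbot : tᶜ ≠ ⊥ := by
    intro h
    have hsub : Subsingleton {x : B // x ≤ tᶜ} :=
      ⟨fun y z => Subtype.ext (by
        have hy := le_bot_iff.1 (y.2.trans h.le)
        have hz := le_bot_iff.1 (z.2.trans h.le)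
        rw [hy, hz])⟩
    have := Fintype.card_le_one_iff_subsingleton.2 hsub
    omega
  have hatom : IsAtom tᶜ := by
    refine ⟨hbot, fun b hb => ?_⟩
    by_contra hb0
    set e0 : {x : B // x ≤ tᶜ} := ⟨⊥, bot_le⟩
    set e1 : {x : B // x ≤ tᶜ} := ⟨b, hb.le⟩
    set e2 : {x : B // x ≤ tᶜ} := ⟨tᶜ, le_rfl⟩
    have hc3 : ({e0, e1, e2} : Finset {x : B // x ≤ tᶜ}).card = 3 := by
      rw [Finset.card_insert_of_notMem, Finset.card_insert_of_notMem,
        Finset.card_singleton]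
      · simp only [Finset.mem_singleton, e1, e2, Subtype.mk.injEq]
        exact hb.ne
      · simp only [Finset.mem_insert, Finset.mem_singleton, e0, e1, e2, Subtype.mk.injEq]
        push_neg
        exact ⟨fun hh => hb0 hh.symm, fun hh => hbot hh.symm⟩
    have hle := Finset.card_le_univ ({e0, e1, e2} : Finset {x : B // x ≤ tᶜ})
    omega
  refine ⟨tᶜ, hatom, fun x => ?_⟩
  rw [hmem x]
  have : x ≤ t ↔ Disjoint tᶜ x := by
    conv_lhs => rw [← compl_compl t]
    exact le_compl_iff_disjoint_left
  rw [this, atom_disjoint_iff hatom]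

end aux2

theorem hadamard_code_of_boolean_ideals {B : Type*} [BooleanAlgebra B] [Fintype B]
    (n : ℕ) (hn : 2 ≤ n) (hcard : Fintype.card B = 2 ^ n)
    (I : Fin n → Order.Ideal B) (hinj : Function.Injective I)
    (hIcard : ∀ i, ((I i : Set B)).ncard = 2 ^ (n - 1)) :
    LinearIndependent (ZMod 2)
        (fun i : Fin n => Set.indicator (I i : Set B) (fun _ => (1 : ZMod 2))) ∧
      ∀ f : B → ZMod 2,
        f ∈ Submodule.span (ZMod 2)
            (Set.range fun i : Fin n =>
              Set.indicator (I i : Set B) (fun _ => (1 : ZMod 2))) →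
          f ≠ 0 → Nat.card {x : B // f x ≠ 0} = 2 ^ (n - 1) := by
  classical
  have hn1 : 1 ≤ n := by omega
  set c : Fin n → B → ZMod 2 :=
    fun i => Set.indicator (I i : Set B) (fun _ => (1 : ZMod 2)) with hc
  have key := fun i => ideal_atom hn1 hcard (I i) (hIcard i)
  choose a ha hmem using key
  have hzmod : ∀ z : ZMod 2, z ≠ 0 → z = 1 := by decide
  have hcval : ∀ i y, c i y = if a i ≤ y then 0 else 1 := by
    intro i y
    by_cases h : a i ≤ y
    · simp [hc, Set.indicator_apply, SetLike.mem_coe, hmem i y, h]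
    · simp [hc, Set.indicator_apply, SetLike.mem_coe, hmem i y, h]
  have hane : ∀ i j, a i = a j → i = j := by
    intro i j hij
    apply hinj
    ext x
    simp only [SetLike.mem_coe, hmem i x, hmem j x, hij]
  have hpow : (2 : ℕ) ^ n = 2 ^ (n - 1) * 2 := by
    rw [← pow_succ]; congr 1; omega
  have count : ∀ (l : Fin n → ZMod 2) (i₀ : Fin n), l i₀ = 1 →
      Nat.card {x : B // (∑ i, l i • c i) x ≠ 0} = 2 ^ (n - 1) := by
    intro l i₀ hl
    set f : B → ZMod 2 := ∑ i, l i • c i with hf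
    have hfx : ∀ x, f x = ∑ i, l i * c i x := by
      intro x; rw [hf]; simp [Finset.sum_apply]
    set σ : B → B := fun x => symmDiff x (a i₀) with hσ
    have hcflip : ∀ x, c i₀ (σ x) = c i₀ x + 1 := by
      intro x
      rw [hcval, hcval]
      have hs : a i₀ ≤ σ x ↔ ¬ a i₀ ≤ x := atom_le_symmDiff_self (ha i₀)
      by_cases h : a i₀ ≤ x
      · rw [if_pos h, if_neg (fun hle => (hs.1 hle) h)]
        decide
      · rw [if_neg h, if_pos (hs.2 h)]
        decide
    have hcsame : ∀ i, i ≠ i₀ → ∀ x, c i (σ x) = c i x := by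
      intro i hi x
      rw [hcval, hcval]
      have hs : a i ≤ σ x ↔ a i ≤ x :=
        atom_le_symmDiff_other (ha i₀) (ha i) (fun hh => hi (hane i i₀ hh))
      rw [hs]
    have hflip : ∀ x, f (σ x) = f x + 1 := by
      intro x
      rw [hfx, hfx]
      have hterm : ∀ i ∈ Finset.univ,
          l i * c i (σ x) = l i * c i x + (if i = i₀ then 1 else 0) := by
        intro i _
        by_cases hii : i = i₀
        · subst hii
          rw [hcflip, if_pos rfl, hl]
          ring
        · rw [hcsame i hii, if_neg hii, add_zero]
      rw [Finset.sum_congr rfl hterm, Finset.sum_add_distrib,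
        Finset.sum_ite_eq' Finset.univ i₀ (fun _ => (1 : ZMod 2)),
        if_pos (Finset.mem_univ _)]
    have hinv : ∀ x, σ (σ x) = x := by
      intro x
      simp only [hσ]
      exact symmDiff_symmDiff_cancel_right _ _
    let E : {x : B // f x ≠ 0} ≃ {x : B // ¬ f x ≠ 0} :=
      { toFun := fun x => ⟨σ x.1, by rw [not_not, hflip, hzmod _ x.2]; decide⟩
        invFun := fun x => ⟨σ x.1, by rw [hflip, not_not.1 x.2]; decide⟩
        left_inv := fun x => Subtype.ext (hinv x.1)
        right_inv := fun x => Subtype.ext (hinv x.1) }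
    have heq : Nat.card {x : B // f x ≠ 0} = Nat.card {x : B // ¬ f x ≠ 0} :=
      Nat.card_congr E
    have hsplit : Nat.card {x : B // f x ≠ 0} + Nat.card {x : B // ¬ f x ≠ 0}
        = 2 ^ n := by
      have h1 := Fintype.card_congr (Equiv.sumCompl (fun x : B => f x ≠ 0))
      rw [Fintype.card_sum] at h1
      rw [Nat.card_eq_fintype_card, Nat.card_eq_fintype_card, h1, hcard]
    omega
  constructor
  · rw [Fintype.linearIndependent_iff]
    intro g hg
    by_contra hne
    push_neg at hne
    obtain ⟨i₀, hi₀⟩ := hne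
    have h1 := count g i₀ (hzmod _ hi₀)
    rw [hg] at h1
    have hempty : IsEmpty {x : B // (0 : B → ZMod 2) x ≠ 0} := ⟨fun x => x.2 rfl⟩
    rw [Nat.card_of_isEmpty] at h1
    have hpos : 0 < (2:ℕ) ^ (n-1) := Nat.pow_pos (by norm_num)
    omega
  · intro f hfmem hf0
    rw [Submodule.mem_span_range_iff_exists_fun (ZMod 2)] at hfmem
    obtain ⟨l, hl⟩ := hfmem
    have hlne : ∃ i₀, l i₀ ≠ 0 := by
      by_contra h
      push_neg at h
      apply hf0
      rw [← hl]
      simp [h]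
    obtain ⟨i₀, hi₀⟩ := hlne
    have h1 := count l i₀ (hzmod _ hi₀)
    rw [hl] at h1
    exact h1
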